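/- Let x, y ∈ ℝ^d and δ > 0, and let S = B(x,δ) △ B(y,δ) be the symmetric difference of the two open Euclidean balls of radius δ centered at x and y. Then vol(S)/vol(B(0,δ)) ≤ (√d/δ)·‖x − y‖. -/

import Mathlib

open MeasureTheory Metric Real Set


lemma gamma_sq_le {x : ℝ} (hx : 0 < x) :
    Real.Gamma (x + 1) ^ 2 ≤ (x + 1/2) * Real.Gamma (x + 1/2) ^ 2 := by
  have hg1 : 0 < Real.Gamma (x + 1) := Real.Gamma_pos_of_pos (by linarith)
  have hg2 : 0 < Real.Gamma (x + 1/2) := Real.Gamma_pos_of_pos (by linarith)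
  have hg3 : 0 < Real.Gamma (x + 3/2) := Real.Gamma_pos_of_pos (by linarith)
  have h32 : Real.Gamma (x + 3/2) = (x + 1/2) * Real.Gamma (x + 1/2) := by
    have := Real.Gamma_add_one (s := x + 1/2) (by positivity)
    rw [show x + 1/2 + 1 = x + 3/2 by ring] at this
    exact this
  have hconv := Real.convexOn_log_Gamma.2 (Set.mem_Ioi.2 (by linarith : (0:ℝ) < x + 1/2))
    (Set.mem_Ioi.2 (by linarith : (0:ℝ) < x + 3/2)) (by norm_num : (0:ℝ) ≤ 1/2)
    (by norm_num : (0:ℝ) ≤ 1/2) (by norm_num)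
  have hmid : (1/2 : ℝ) • (x + 1/2) + (1/2 : ℝ) • (x + 3/2) = x + 1 := by
    simp only [smul_eq_mul]; ring
  rw [hmid] at hconv
  simp only [Function.comp_apply, smul_eq_mul] at hconv
  have h1 : Real.log (Real.Gamma (x+1) ^ 2) ≤ Real.log (Real.Gamma (x+1/2) * Real.Gamma (x+3/2)) := by
    rw [Real.log_pow, Real.log_mul (ne_of_gt hg2) (ne_of_gt hg3)]
    push_cast
    linarith
  have h2 : Real.Gamma (x+1) ^ 2 ≤ Real.Gamma (x+1/2) * Real.Gamma (x+3/2) :=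
    (Real.log_le_log_iff (by positivity) (by positivity)).mp h1
  calc Real.Gamma (x + 1) ^ 2 ≤ Real.Gamma (x+1/2) * Real.Gamma (x+3/2) := h2
    _ = (x + 1/2) * Real.Gamma (x + 1/2) ^ 2 := by rw [h32]; ring


lemma vol_ball_toReal {m : ℕ} (hm : 0 < m) {δ : ℝ} (hδ : 0 ≤ δ) :
    (volume (ball (0 : EuclideanSpace ℝ (Fin m)) δ)).toReal
      = δ ^ m * (Real.sqrt π ^ m / Real.Gamma (m / 2 + 1)) := by
  haveI : Nonempty (Fin m) := Fin.pos_iff_nonempty.mp hm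
  have hg : 0 < Real.Gamma ((m : ℝ) / 2 + 1) := Real.Gamma_pos_of_pos (by positivity)
  rw [EuclideanSpace.volume_ball, Fintype.card_fin, ENNReal.toReal_mul, ENNReal.toReal_pow,
    ENNReal.toReal_ofReal hδ, ENNReal.toReal_ofReal (by positivity)]

lemma vol_ball_zero_dim {δ : ℝ} (hδ : 0 < δ) :
    (volume (ball (0 : EuclideanSpace ℝ (Fin 0)) δ)).toReal = 1 := by
  have h : (ball (0 : EuclideanSpace ℝ (Fin 0)) δ) = univ := by
    apply eq_univ_of_forall
    intro z
    simpa [Subsingleton.elim z 0] using hδ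
  rw [h]
  have := (EuclideanSpace.volume_preserving_symm_measurableEquiv_toLp (Fin 0)).measure_preimage
    (MeasurableSet.univ (α := Fin 0 → ℝ)).nullMeasurableSet
  rw [show (univ : Set (EuclideanSpace ℝ (Fin 0))) = (MeasurableEquiv.toLp 2 (Fin 0 → ℝ)).symm ⁻¹' univ from rfl, this]
  rw [MeasureTheory.volume_pi, Measure.pi_univ]
  simp

lemma Gamma_three_halves : Real.Gamma (1/2 + 1) = Real.sqrt π / 2 := by
  rw [Real.Gamma_add_one (by norm_num), Real.Gamma_one_half_eq]
  ring

lemma two_vol_le (n : ℕ) {δ : ℝ} (hδ : 0 < δ) :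
    2 * (volume (ball (0 : EuclideanSpace ℝ (Fin n)) δ)).toReal ≤
      Real.sqrt (n + 1) / δ * (volume (ball (0 : EuclideanSpace ℝ (Fin (n + 1))) δ)).toReal := by
  rcases Nat.eq_zero_or_pos n with rfl | hn
  · rw [vol_ball_zero_dim hδ, vol_ball_toReal (m := 0+1) (by norm_num) hδ.le]
    push_cast
    rw [Gamma_three_halves]
    have hπ : 0 < Real.sqrt π := Real.sqrt_pos.mpr Real.pi_pos
    rw [show (0:ℝ)+1 = 1 by norm_num, Real.sqrt_one]
    rw [pow_one, pow_one]
    rw [div_div_eq_mul_div, mul_comm]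
    field_simp
    exact le_rfl
  · rw [vol_ball_toReal hn hδ.le, vol_ball_toReal (Nat.succ_pos n) hδ.le]
    have ha : 0 < Real.Gamma ((n : ℝ) / 2 + 1) := Real.Gamma_pos_of_pos (by positivity)
    have hb : 0 < Real.Gamma (((n : ℕ) + 1 : ℕ) / 2 + 1 : ℝ) := Real.Gamma_pos_of_pos (by positivity)
    have hb' : 0 < Real.Gamma (((n : ℝ) + 1) / 2 + 1) := Real.Gamma_pos_of_pos (by positivity)
    have hkey : 2 * Real.Gamma (((n : ℝ) + 1) / 2 + 1) ≤
        Real.sqrt ((n : ℝ) + 1) * Real.sqrt π * Real.Gamma ((n : ℝ) / 2 + 1) := by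
      have h1 := gamma_sq_le (x := ((n : ℝ) + 1) / 2) (by positivity)
      rw [show ((n : ℝ) + 1) / 2 + 1/2 = (n : ℝ)/2 + 1 by ring] at h1
      -- h1 : Γ((n+1)/2 + 1)^2 ≤ ((n+1)/2 + 1/2) Γ(n/2+1)^2
      have hsq : (2 * Real.Gamma (((n : ℝ) + 1) / 2 + 1)) ^ 2 ≤
          (Real.sqrt ((n : ℝ) + 1) * Real.sqrt π * Real.Gamma ((n : ℝ) / 2 + 1)) ^ 2 := by
        have e : (Real.sqrt ((n : ℝ) + 1) * Real.sqrt π * Real.Gamma ((n : ℝ) / 2 + 1)) ^ 2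
            = ((n : ℝ) + 1) * π * Real.Gamma ((n : ℝ) / 2 + 1) ^ 2 := by
          rw [mul_pow, mul_pow, Real.sq_sqrt (by positivity), Real.sq_sqrt Real.pi_pos.le]
        rw [e]
        have hπ := Real.pi_gt_three
        have hn1 : (1 : ℝ) ≤ (n : ℝ) := by exact_mod_cast hn
        have hc : (2 * (n:ℝ) + 4) ≤ ((n:ℝ) + 1) * π := by nlinarith
        have hc2 := mul_le_mul_of_nonneg_right hc (sq_nonneg (Real.Gamma ((n : ℝ) / 2 + 1)))
        nlinarith
      have h2 : (0:ℝ) ≤ 2 * Real.Gamma (((n : ℝ) + 1) / 2 + 1) := by positivity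
      have h3 : (0:ℝ) ≤ Real.sqrt ((n : ℝ) + 1) * Real.sqrt π * Real.Gamma ((n : ℝ) / 2 + 1) := by
        positivity
      nlinarith
    -- now the main computation
    push_cast
    have hδn : (0:ℝ) < δ ^ n := by positivity
    have hπ : (0:ℝ) < Real.sqrt π ^ n := by positivity
    have hπ1 : (0:ℝ) < Real.sqrt π := Real.sqrt_pos.mpr Real.pi_pos
    rw [pow_succ, pow_succ]
    rw [div_mul_eq_mul_div, le_div_iff₀ hδ]
    have expand := mul_le_mul_of_nonneg_right hkey (mul_pos hδn hπ).le
    calc 2 * (δ ^ n * (√π ^ n / Real.Gamma ((n:ℝ) / 2 + 1))) * δ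
        = (2 * Real.Gamma (((n:ℝ) + 1) / 2 + 1)) * (δ ^ n * √π ^ n)
          * (δ / (Real.Gamma ((n:ℝ)/2+1) * Real.Gamma (((n:ℝ)+1)/2+1))) := by
          field_simp
      _ ≤ (√((n:ℝ) + 1) * √π * Real.Gamma ((n:ℝ) / 2 + 1)) * (δ ^ n * √π ^ n)
          * (δ / (Real.Gamma ((n:ℝ)/2+1) * Real.Gamma (((n:ℝ)+1)/2+1))) := by
          apply mul_le_mul_of_nonneg_right _ (by positivity)
          exact mul_le_mul_of_nonneg_right hkey (by positivity)
      _ = √((n:ℝ) + 1) * (δ ^ n * δ * (√π ^ n * √π / Real.Gamma (((n:ℝ) + 1) / 2 + 1))) := by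
          field_simp


variable {n : ℕ}

local notation "E" => EuclideanSpace ℝ (Fin (n + 1))

lemma meas_lt (c : ℝ) : MeasurableSet {z : E | z 0 < c} := by
  have hc : Continuous fun z : E => z 0 := (EuclideanSpace.proj (0 : Fin (n+1))).continuous
  exact measurableSet_lt hc.measurable measurable_const

lemma meas_abs (c : ℝ) : MeasurableSet {z : E | |z 0| ≤ c} := by
  have hc : Continuous fun z : E => z 0 := (EuclideanSpace.proj (0 : Fin (n+1))).continuous
  exact (isClosed_le (continuous_abs.comp hc) continuous_const).measurableSet

lemma inner_single (r : ℝ) (z : E) :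
    (inner ℝ z (EuclideanSpace.single (0 : Fin (n+1)) r) : ℝ) = r * z 0 := by
  rw [EuclideanSpace.inner_single_right]
  simp

lemma add_apply_zero (v w : E) : (v + w) 0 = v 0 + w 0 := rfl

lemma symmDiff_le_slab {δ r : ℝ} (hδ : 0 < δ) (hr : 0 < r) :
    volume (symmDiff (ball (0 : E) δ) (ball (EuclideanSpace.single 0 r) δ)) ≤
      2 * volume (ball (0 : E) δ ∩ {z : E | |z 0| ≤ r / 2}) := by
  set v : E := EuclideanSpace.single 0 r with hv
  set B : Set E := ball 0 δ with hB
  set B' : Set E := ball v δ with hB'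
  have hv0 : v 0 = r := by simp [hv, EuclideanSpace.single_apply]
  have hnv : ‖v‖ = r := by rw [hv, EuclideanSpace.norm_single, Real.norm_eq_abs, abs_of_pos hr]
  -- (a) B ∩ {z0 ≥ r/2} ⊆ B'
  have ha : B ∩ {z : E | r / 2 ≤ z 0} ⊆ B' := by
    rintro z ⟨hzB, hz0⟩
    have hz0' : r / 2 ≤ z 0 := hz0
    rw [hB', mem_ball_iff_norm]
    have h1 : ‖z - v‖ ^ 2 = ‖z‖ ^ 2 - 2 * (r * z 0) + r ^ 2 := by
      rw [norm_sub_sq_real, inner_single, hnv]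
    have h2 : ‖z‖ < δ := by rwa [hB, mem_ball_zero_iff] at hzB
    have h5 : ‖z - v‖ ^ 2 < δ ^ 2 := by
      have := mul_le_mul_of_nonneg_left hz0' hr.le
      nlinarith [norm_nonneg z]
    exact lt_of_pow_lt_pow_left₀ 2 hδ.le h5
  -- (b) B' ∩ {z0 < r/2} ⊆ B
  have hb : B' ∩ {z : E | z 0 < r / 2} ⊆ B := by
    rintro z ⟨hzB, hz0⟩
    have hz0' : z 0 < r / 2 := hz0
    rw [hB, mem_ball_zero_iff]
    have h1 : ‖z - v‖ ^ 2 = ‖z‖ ^ 2 - 2 * (r * z 0) + r ^ 2 := by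
      rw [norm_sub_sq_real, inner_single, hnv]
    have h2 : ‖z - v‖ < δ := by rwa [hB', mem_ball_iff_norm] at hzB
    have h5 : ‖z‖ ^ 2 < δ ^ 2 := by
      have := mul_lt_mul_of_pos_left hz0' hr
      nlinarith [norm_nonneg (z - v)]
    exact lt_of_pow_lt_pow_left₀ 2 hδ.le h5
  -- translation: vol (B' ∩ {z0 < r/2}) = vol (B ∩ {z0 < -r/2})
  have htrans : volume (B' ∩ {z : E | z 0 < r / 2}) = volume (B ∩ {z : E | z 0 < -(r/2)}) := by
    rw [← measure_preimage_add volume v (B' ∩ {z : E | z 0 < r / 2})]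
    congr 1
    ext w
    simp only [mem_preimage, mem_inter_iff, mem_setOf_eq, hB', hB, mem_ball_iff_norm,
      mem_ball_zero_iff, add_sub_cancel_left, add_apply_zero, hv0, sub_zero]
    constructor
    · rintro ⟨h1, h2⟩; exact ⟨h1, by linarith⟩
    · rintro ⟨h1, h2⟩; exact ⟨h1, by linarith⟩
  -- negation: vol (B ∩ {z0 < -r/2}) = vol (B ∩ {z0 > r/2})  -- not needed; reflection used in cover
  have hneg : volume (B ∩ {z : E | z 0 < -(r/2)}) = volume (B ∩ {z : E | r / 2 < z 0}) := by
    have mp := (LinearIsometryEquiv.neg ℝ :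
      EuclideanSpace ℝ (Fin (n+1)) ≃ₗᵢ[ℝ] EuclideanSpace ℝ (Fin (n+1))).measurePreserving
    rw [← mp.measure_preimage ((measurableSet_ball.inter (meas_lt _)).nullMeasurableSet)]
    congr 1
    ext w
    simp only [mem_preimage, mem_inter_iff, mem_setOf_eq, hB, mem_ball_zero_iff,
      LinearIsometryEquiv.coe_neg, norm_neg]
    have : (-w) 0 = -(w 0) := rfl
    rw [this]
    constructor
    · rintro ⟨h1, h2⟩; exact ⟨h1, by linarith⟩
    · rintro ⟨h1, h2⟩; exact ⟨h1, by linarith⟩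
  -- bookkeeping
  have hBfin : volume B < ⊤ := measure_ball_lt_top
  have hBB' : volume B' = volume B := by
    rw [hB', hB, Measure.addHaar_ball_center]
  have hsd : volume (symmDiff B B') = volume (B \ B') + volume (B' \ B) := by
    rw [Set.symmDiff_def]
    exact measure_union (disjoint_sdiff_sdiff) (measurableSet_ball.diff measurableSet_ball)
  have h1 : volume (B ∩ B') + volume (B \ B') = volume B :=
    measure_inter_add_diff B measurableSet_ball
  have h2 : volume (B ∩ B') + volume (B' \ B) = volume B' := by
    rw [inter_comm]
    exact measure_inter_add_diff B' measurableSet_ball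
  have hA2 : volume (B ∩ {z : E | z 0 < -(r/2)}) = volume (B' ∩ {z : E | z 0 < r / 2}) :=
    htrans.symm
  have hinter : volume (B ∩ {z : E | r / 2 ≤ z 0}) + volume (B ∩ {z : E | z 0 < -(r/2)})
      ≤ volume (B ∩ B') := by
    rw [hA2, ← measure_union ?hd ?hm]
    · apply measure_mono
      apply union_subset
      · exact subset_inter (inter_subset_left) ha
      · exact subset_inter hb (inter_subset_left)
    case hd =>
      apply Set.disjoint_left.mpr
      rintro z ⟨_, hz1⟩ ⟨_, hz2⟩
      have hz1' : r / 2 ≤ z 0 := hz1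
      have hz2' : z 0 < r / 2 := hz2
      linarith
    case hm => exact measurableSet_ball.inter (meas_lt _)
  have hcover : volume B ≤ volume (B ∩ {z : E | r / 2 ≤ z 0})
      + volume (B ∩ {z : E | |z 0| ≤ r / 2}) + volume (B ∩ {z : E | z 0 < -(r/2)}) := by
    have hsub : B ⊆ (B ∩ {z : E | r / 2 ≤ z 0}) ∪ (B ∩ {z : E | |z 0| ≤ r / 2})
        ∪ (B ∩ {z : E | z 0 < -(r/2)}) := by
      intro z hz
      rcases le_or_gt (r/2) (z 0) with h | h
      · exact Or.inl (Or.inl ⟨hz, h⟩)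
      · rcases lt_or_ge (z 0) (-(r/2)) with h' | h'
        · exact Or.inr ⟨hz, h'⟩
        · exact Or.inl (Or.inr ⟨hz, abs_le.mpr ⟨h', h.le⟩⟩)
    calc volume B ≤ volume ((B ∩ {z : E | r / 2 ≤ z 0}) ∪ (B ∩ {z : E | |z 0| ≤ r / 2})
        ∪ (B ∩ {z : E | z 0 < -(r/2)})) := measure_mono hsub
      _ ≤ volume ((B ∩ {z : E | r / 2 ≤ z 0}) ∪ (B ∩ {z : E | |z 0| ≤ r / 2}))
          + volume (B ∩ {z : E | z 0 < -(r/2)}) := measure_union_le _ _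
      _ ≤ volume (B ∩ {z : E | r / 2 ≤ z 0}) + volume (B ∩ {z : E | |z 0| ≤ r / 2})
          + volume (B ∩ {z : E | z 0 < -(r/2)}) := by
          exact add_le_add_left (measure_union_le _ _) _
  -- combine
  have hIfin : volume (B ∩ B') ≠ ⊤ :=
    (lt_of_le_of_lt (measure_mono inter_subset_left) hBfin).ne
  have hmain : volume (symmDiff B B') + 2 * volume (B ∩ B')
      ≤ 2 * volume (B ∩ {z : E | |z 0| ≤ r / 2}) + 2 * volume (B ∩ B') := by
    calc volume (symmDiff B B') + 2 * volume (B ∩ B')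
        = (volume (B ∩ B') + volume (B \ B')) + (volume (B ∩ B') + volume (B' \ B)) := by
          rw [hsd]; ring
      _ = volume B + volume B' := by rw [h1, h2]
      _ = 2 * volume B := by rw [hBB', two_mul]
      _ ≤ 2 * (volume (B ∩ {z : E | r / 2 ≤ z 0}) + volume (B ∩ {z : E | |z 0| ≤ r / 2})
          + volume (B ∩ {z : E | z 0 < -(r/2)})) := by
          exact mul_le_mul_right hcover 2
      _ = 2 * volume (B ∩ {z : E | |z 0| ≤ r / 2})
          + 2 * (volume (B ∩ {z : E | r / 2 ≤ z 0}) + volume (B ∩ {z : E | z 0 < -(r/2)})) := by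
          ring
      _ ≤ 2 * volume (B ∩ {z : E | |z 0| ≤ r / 2}) + 2 * volume (B ∩ B') := by
          exact add_le_add_right (mul_le_mul_right hinter 2) _
  have h2fin : 2 * volume (B ∩ B') ≠ ⊤ := by
    exact ENNReal.mul_ne_top (by norm_num) hIfin
  exact (ENNReal.add_le_add_iff_right h2fin).mp hmain

lemma measurable_sumsq {m : ℕ} (c : ℝ) : MeasurableSet {g : Fin m → ℝ | ∑ i, g i ^ 2 < c} := by
  have : Continuous fun g : Fin m → ℝ => ∑ i, g i ^ 2 :=
    continuous_finset_sum _ fun i _ => (continuous_apply i).pow 2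
  exact measurableSet_lt this.measurable measurable_const

lemma slab_vol_le {δ r : ℝ} (hδ : 0 < δ) (hr : 0 < r) :
    volume (ball (0 : E) δ ∩ {z : E | |z 0| ≤ r / 2}) ≤
      ENNReal.ofReal r * volume (ball (0 : EuclideanSpace ℝ (Fin n)) δ) := by
  have mp := ((volume_preserving_piFinSuccAbove (fun _ : Fin (n+1) => ℝ) 0).comp
    (EuclideanSpace.volume_preserving_symm_measurableEquiv_toLp (Fin (n+1))))
  set P : Set (Fin n → ℝ) := {g | ∑ i, g i ^ 2 < δ ^ 2} with hP
  set T : Set (ℝ × (Fin n → ℝ)) := (Icc (-(r/2)) (r/2)) ×ˢ P with hT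
  have hTm : MeasurableSet T := measurableSet_Icc.prod (measurable_sumsq _)
  have hsub : ball (0 : E) δ ∩ {z : E | |z 0| ≤ r / 2} ⊆
      ((MeasurableEquiv.piFinSuccAbove (fun _ : Fin (n+1) => ℝ) 0) ∘
        (MeasurableEquiv.toLp 2 (Fin (n+1) → ℝ)).symm) ⁻¹' T := by
    rintro z ⟨hz1, hz2⟩
    have hz2' : |z 0| ≤ r / 2 := hz2
    rw [EuclideanSpace.ball_zero_eq _ hδ.le] at hz1
    have hz1' : ∑ i, z i ^ 2 < δ ^ 2 := hz1
    constructor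
    · simp only [mem_Icc]
      exact abs_le.mp hz2'
    · show ∑ j : Fin n, (z ((0 : Fin (n+1)).succAbove j)) ^ 2 < δ ^ 2
      have hsplit : ∑ i : Fin (n+1), z i ^ 2
          = z 0 ^ 2 + ∑ j : Fin n, (z j.succ) ^ 2 := Fin.sum_univ_succ _
      have : ∑ j : Fin n, (z ((0 : Fin (n+1)).succAbove j)) ^ 2
          = ∑ j : Fin n, (z j.succ) ^ 2 := by
        apply Finset.sum_congr rfl
        intro j _
        rw [Fin.succAbove_zero]
      rw [this]
      nlinarith [sq_nonneg (z 0)]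
  calc volume (ball (0 : E) δ ∩ {z : E | |z 0| ≤ r / 2})
      ≤ volume (((MeasurableEquiv.piFinSuccAbove (fun _ : Fin (n+1) => ℝ) 0) ∘
        (MeasurableEquiv.toLp 2 (Fin (n+1) → ℝ)).symm) ⁻¹' T) := measure_mono hsub
    _ = volume T := mp.measure_preimage hTm.nullMeasurableSet
    _ = volume (Icc (-(r/2)) (r/2)) * volume P := by
        rw [hT, MeasureTheory.Measure.volume_eq_prod, Measure.prod_prod]
    _ = ENNReal.ofReal r * volume P := by
        rw [Real.volume_Icc, show r/2 - (-(r/2)) = r by ring]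
    _ = ENNReal.ofReal r * volume (ball (0 : EuclideanSpace ℝ (Fin n)) δ) := by
        congr 1
        rw [← (EuclideanSpace.volume_preserving_symm_measurableEquiv_toLp (Fin n)).measure_preimage
          (measurable_sumsq _).nullMeasurableSet]
        congr 1
        rw [EuclideanSpace.ball_zero_eq _ hδ.le]
        rfl


theorem volume_symmDiff_ball_div_le (d : ℕ) (δ : ℝ) (hδ : 0 < δ)
    (x y : EuclideanSpace ℝ (Fin d)) :
    (volume (symmDiff (ball x δ) (ball y δ))).toReal /
        (volume (ball (0 : EuclideanSpace ℝ (Fin d)) δ)).toReal ≤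
      Real.sqrt d / δ * ‖x - y‖ := by
  by_cases hxy : x = y
  · subst hxy
    simp only [symmDiff_self, bot_eq_empty, measure_empty, ENNReal.toReal_zero, zero_div,
      sub_self, norm_zero, mul_zero, le_refl]
  obtain _ | n := d
  · haveI : Subsingleton (EuclideanSpace ℝ (Fin 0)) := ⟨fun a b => by ext i; exact i.elim0⟩
    exact absurd (Subsingleton.elim x y) hxy
  set r : ℝ := ‖x - y‖ with hrdef
  have hr : 0 < r := norm_pos_iff.mpr (sub_ne_zero.mpr hxy)
  set v : EuclideanSpace ℝ (Fin (n+1)) := EuclideanSpace.single 0 r with hv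
  have hnv : ‖v‖ = ‖y - x‖ := by
    rw [hv, EuclideanSpace.norm_single, Real.norm_eq_abs, abs_of_pos hr, hrdef, norm_sub_rev]
  set T := Submodule.reflection (ℝ ∙ (v - (y - x)))ᗮ with hTdef
  have hT : T v = y - x := Submodule.reflection_sub hnv
  have hTmp : MeasurePreserving (fun z : EuclideanSpace ℝ (Fin (n+1)) => T z + x)
      volume volume :=
    (measurePreserving_add_right volume x).comp
      (LinearIsometryEquiv.measurePreserving (T : _ ≃ₗᵢ[ℝ] _))
  have hpre : (fun z : EuclideanSpace ℝ (Fin (n+1)) => T z + x) ⁻¹'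
      (symmDiff (ball x δ) (ball y δ))
      = symmDiff (ball (0 : EuclideanSpace ℝ (Fin (n+1))) δ) (ball v δ) := by
    have h1 : (fun z : EuclideanSpace ℝ (Fin (n+1)) => T z + x) ⁻¹' (ball x δ)
        = ball (0 : EuclideanSpace ℝ (Fin (n+1))) δ := by
      ext z
      simp only [mem_preimage, mem_ball_iff_norm, add_sub_cancel_right, mem_ball_zero_iff,
        sub_zero]
      rw [T.norm_map]
    have h2 : (fun z : EuclideanSpace ℝ (Fin (n+1)) => T z + x) ⁻¹' (ball y δ)
        = ball v δ := by
      ext z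
      simp only [mem_preimage, mem_ball_iff_norm]
      have : T z + x - y = T z - T v := by rw [hT]; abel
      rw [this, ← T.map_sub, T.norm_map]
    rw [Set.preimage_symmDiff, h1, h2]
  have hvol : volume (symmDiff (ball x δ) (ball y δ))
      = volume (symmDiff (ball (0 : EuclideanSpace ℝ (Fin (n+1))) δ) (ball v δ)) := by
    rw [← hTmp.measure_preimage
      (measurableSet_ball.symmDiff measurableSet_ball).nullMeasurableSet, hpre]
  -- volumes
  set Vd := volume (ball (0 : EuclideanSpace ℝ (Fin (n+1))) δ) with hVd
  set Vn := volume (ball (0 : EuclideanSpace ℝ (Fin n)) δ) with hVn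
  have hVd_fin : Vd < ⊤ := measure_ball_lt_top
  have hVn_fin : Vn < ⊤ := measure_ball_lt_top
  have hVd_pos : 0 < Vd.toReal := by
    refine ENNReal.toReal_pos (ne_of_gt ?_) hVd_fin.ne
    exact measure_ball_pos volume _ hδ
  have hchain : volume (symmDiff (ball x δ) (ball y δ)) ≤ 2 * (ENNReal.ofReal r * Vn) := by
    rw [hvol]
    calc volume (symmDiff (ball (0 : EuclideanSpace ℝ (Fin (n+1))) δ) (ball v δ))
        ≤ 2 * volume (ball (0 : EuclideanSpace ℝ (Fin (n+1))) δ
            ∩ {z : EuclideanSpace ℝ (Fin (n+1)) | |z 0| ≤ r / 2}) := symmDiff_le_slab hδ hr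
      _ ≤ 2 * (ENNReal.ofReal r * Vn) := by
          exact mul_le_mul_right (slab_vol_le hδ hr) 2
  have htoReal : (volume (symmDiff (ball x δ) (ball y δ))).toReal ≤ 2 * r * Vn.toReal := by
    have hfin : 2 * (ENNReal.ofReal r * Vn) ≠ ⊤ := by
      exact ENNReal.mul_ne_top (by norm_num) (ENNReal.mul_ne_top ENNReal.ofReal_ne_top hVn_fin.ne)
    calc (volume (symmDiff (ball x δ) (ball y δ))).toReal
        ≤ (2 * (ENNReal.ofReal r * Vn)).toReal := ENNReal.toReal_mono hfin hchain
      _ = 2 * r * Vn.toReal := by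
          rw [ENNReal.toReal_mul, ENNReal.toReal_mul, ENNReal.toReal_ofReal hr.le]
          norm_num
          ring
  rw [div_le_iff₀ hVd_pos]
  have h2V := two_vol_le n hδ
  calc (volume (symmDiff (ball x δ) (ball y δ))).toReal ≤ 2 * r * Vn.toReal := htoReal
    _ = r * (2 * Vn.toReal) := by ring
    _ ≤ r * (Real.sqrt ((n : ℝ) + 1) / δ * Vd.toReal) := by
        apply mul_le_mul_of_nonneg_left _ hr.le
        exact_mod_cast h2V
    _ = Real.sqrt ((n : ℕ) + 1 : ℕ) / δ * r * Vd.toReal := by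
        push_cast
        ring
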